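/- Let V₁,...,V_n be independent random variables, σ a uniform random permutation independent of the values, τ₁ ≥ ... ≥ τ_n nonincreasing thresholds, and T the stopping time of TTA. Then for all i, k ∈ [n], P(T ≥ k | σ(k) = i) ≥ P(T > k) / (1 - k/n + (1/n)·Σ_{l∈[k]} P(V_i ≤ τ_l)). -/

import Mathlib

open MeasureTheory ProbabilityTheory

/-- Stopping time of the time-threshold algorithm (1-based time): the first time `k ∈ [1,n]`
at which the revealed value `V_{σ(k)}` strictly exceeds the threshold `τ k`, and `n+1`
(meaning "never stops") if no such time exists. -/
noncomputable def stopT {Ω : Type*} {n : ℕ} (V : Fin n → Ω → ℝ) (τ : ℕ → ℝ)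
    (σ : Ω → Equiv.Perm (Fin n)) (ω : Ω) : ℕ :=
  sInf ({k : ℕ | ∃ j : Fin n, (j : ℕ) + 1 = k ∧ τ k < V (σ ω j) ω} ∪ {n + 1})



/-- Cycle sending `c ↦ p`, and `j ↦ j+1` for `p ≤ j < c`; identity elsewhere (needs `p ≤ c`). -/
def cyc {n : ℕ} (p c : Fin n) (hpc : p.val ≤ c.val) : Equiv.Perm (Fin n) where
  toFun j := if j.val = c.val then p
    else if h : p.val ≤ j.val ∧ j.val < c.val then ⟨j.val + 1, by omega⟩ else j
  invFun j := if j.val = p.val then c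
    else if h : p.val < j.val ∧ j.val ≤ c.val then ⟨j.val - 1, by omega⟩ else j
  left_inv j := by
    dsimp only
    split_ifs <;> (apply Fin.ext; simp_all) <;> omega
  right_inv j := by
    dsimp only
    split_ifs <;> (apply Fin.ext; simp_all) <;> omega

lemma cyc_apply_c {n : ℕ} (p c : Fin n) (hpc : p.val ≤ c.val) : cyc p c hpc c = p := by
  simp [cyc]

lemma cyc_apply_lt {n : ℕ} (p c : Fin n) (hpc : p.val ≤ c.val) (j : Fin n) (h : j.val < p.val) :
    cyc p c hpc j = j := by
  show (if _ then _ else _) = j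
  split_ifs with h1 h2
  · exact absurd h1 (by omega)
  · exact absurd h2.1 (by omega)
  · rfl

lemma cyc_apply_mid {n : ℕ} (p c : Fin n) (hpc : p.val ≤ c.val) (j : Fin n)
    (h1 : p.val ≤ j.val) (h2 : j.val < c.val) :
    (cyc p c hpc j).val = j.val + 1 := by
  show (if _ then _ else _ : Fin n).val = _
  rw [if_neg (by omega), dif_pos ⟨h1, h2⟩]

lemma cyc_apply_gt {n : ℕ} (p c : Fin n) (hpc : p.val ≤ c.val) (j : Fin n) (h : c.val < j.val) :
    cyc p c hpc j = j := by
  show (if _ then _ else _) = j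
  rw [if_neg (by omega), dif_neg (by omega)]
open Finset

-- fiber bijection for sums over permutations
lemma fiber_sum {n : ℕ} (e : Equiv.Perm (Fin n)) (q jj i : Fin n) (he : e jj = q)
    (h : Equiv.Perm (Fin n) → ℝ) :
    ∑ π ∈ univ.filter (fun π : Equiv.Perm (Fin n) => π q = i), h (π * e)
      = ∑ π ∈ univ.filter (fun π : Equiv.Perm (Fin n) => π jj = i), h π := by
  refine Finset.sum_nbij' (fun π => π * e) (fun π => π * e⁻¹) ?_ ?_ ?_ ?_ ?_
  · intro π hπ
    simp only [mem_filter, mem_univ, true_and] at *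
    rw [Equiv.Perm.mul_apply, he, hπ]
  · intro π hπ
    simp only [mem_filter, mem_univ, true_and] at *
    rw [Equiv.Perm.mul_apply, ← he, (by exact Equiv.symm_apply_apply e jj : e⁻¹ (e jj) = jj), hπ]
  · intro π _; group
  · intro π _; group
  · intro π _; rfl

lemma card_fiber {n : ℕ} (a b : Fin n) :
    (univ.filter (fun π : Equiv.Perm (Fin n) => π a = b)).card * n = n.factorial := by
  have h1 : ∀ b' : Fin n,
      (univ.filter (fun π : Equiv.Perm (Fin n) => π a = b')).card
        = (univ.filter (fun π : Equiv.Perm (Fin n) => π a = b)).card := by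
    intro b'
    refine Finset.card_nbij' (fun π => Equiv.swap b' b * π) (fun π => Equiv.swap b' b * π)
      ?_ ?_ ?_ ?_ <;> intro π hπ <;>
      simp only [mem_coe, mem_filter, mem_univ, true_and, Equiv.Perm.mul_apply] at *
    · rw [hπ, Equiv.swap_apply_left]
    · rw [hπ, Equiv.swap_apply_right]
    · simp [← mul_assoc]
    · simp [← mul_assoc]
  have h2 : (Finset.univ : Finset (Equiv.Perm (Fin n))).card
      = ∑ b' : Fin n, (univ.filter (fun π : Equiv.Perm (Fin n) => π a = b')).card :=
    Finset.card_eq_sum_card_fiberwise (fun π _ => mem_univ (π a))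
  rw [Finset.card_univ, Fintype.card_perm, Fintype.card_fin] at h2
  rw [h2]
  simp only [h1, Finset.sum_const, Finset.card_univ, Fintype.card_fin, smul_eq_mul]
  ring

section Combin
variable {n : ℕ}

lemma perfiber (k : ℕ) (hk1 : 1 ≤ k) (hkn : k ≤ n)
    (jj : Fin n) (hjj : (jj : ℕ) + 1 = k) (i : Fin n)
    (G : Fin n → ℕ → ℝ) (hG0 : ∀ a m, 0 ≤ G a m) (hG1 : ∀ a m, G a m ≤ 1)
    (hGmono : ∀ a m, 1 ≤ m → m < n → G a (m + 1) ≤ G a m) (q : Fin n) :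
    ∑ π ∈ univ.filter (fun π : Equiv.Perm (Fin n) => π q = i),
        ∏ j ∈ univ.filter (fun j : Fin n => (j : ℕ) + 1 ≤ k), G (π j) ((j : ℕ) + 1)
      ≤ (if (q : ℕ) < k then G i ((q : ℕ) + 1) else 1)
        * ∑ π ∈ univ.filter (fun π : Equiv.Perm (Fin n) => π jj = i),
            ∏ j ∈ univ.filter (fun j : Fin n => (j : ℕ) + 1 ≤ k - 1), G (π j) ((j : ℕ) + 1) := by
  set S : ℕ → Finset (Fin n) := fun m => univ.filter (fun j : Fin n => (j : ℕ) + 1 ≤ m) with hS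
  have hprodnn : ∀ (π : Equiv.Perm (Fin n)) m, 0 ≤ ∏ j ∈ S m, G (π j) ((j : ℕ) + 1) :=
    fun π m => Finset.prod_nonneg (fun j _ => hG0 _ _)
  by_cases hq : (q : ℕ) < k
  · -- case A : i is revealed at time q+1 ≤ k
    rw [if_pos hq]
    have hqj : (q : ℕ) ≤ (jj : ℕ) := by omega
    set e := cyc q jj hqj with he
    have key : ∀ π : Equiv.Perm (Fin n), π q = i →
        ∏ j ∈ S k, G (π j) ((j : ℕ) + 1)
          ≤ G i ((q : ℕ) + 1) * ∏ j ∈ S (k-1), G ((π * e) j) ((j : ℕ) + 1) := by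
      intro π hπ
      have hqS : q ∈ S k := by simp [hS]; omega
      rw [← Finset.mul_prod_erase _ _ hqS, hπ]
      refine mul_le_mul_of_nonneg_left ?_ (hG0 _ _)
      have hre : ∏ j ∈ S (k-1), G ((π * e) j) ((j : ℕ) + 1)
          = ∏ j' ∈ (S k).erase q, G (π j') (((e.symm j' : Fin n) : ℕ) + 1) := by
        refine Finset.prod_nbij' (fun j => e j) (fun j' => e.symm j') ?_ ?_ ?_ ?_ ?_
        · intro j hj
          simp only [hS, mem_filter, mem_univ, true_and] at hj
          have hjne : j ≠ jj := by intro h; subst h; omega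
          simp only [Finset.mem_erase, hS, mem_filter, mem_univ, true_and]
          rcases lt_or_ge (j : ℕ) (q : ℕ) with h | h
          · rw [cyc_apply_lt q jj hqj j h]
            constructor
            · intro hc; subst hc; omega
            · omega
          · have hm : ((e j : Fin n) : ℕ) = (j : ℕ) + 1 :=
              cyc_apply_mid q jj hqj j h (by omega)
            constructor
            · intro hc
              rw [hc] at hm; omega
            · omega
        · intro j' hj'
          simp only [Finset.mem_erase, hS, mem_filter, mem_univ, true_and] at hj'
          obtain ⟨hne, hle⟩ := hj'
          simp only [hS, mem_filter, mem_univ, true_and]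
          rcases lt_or_ge (j' : ℕ) (q : ℕ) with h | h
          · have : e j' = j' := cyc_apply_lt q jj hqj j' h
            rw [← this, Equiv.symm_apply_apply]; omega
          · have hgt : (q : ℕ) < (j' : ℕ) := by
              rcases lt_or_eq_of_le h with h' | h'
              · exact h'
              · exact absurd (Fin.ext h'.symm) hne
            have hj'1 : (j' : ℕ) - 1 < n := by omega
            have : e ⟨(j' : ℕ) - 1, by omega⟩ = j' := by
              apply Fin.ext
              rw [cyc_apply_mid q jj hqj _ (by simp; omega) (by simp; omega)]
              simp; omega
            rw [← this, Equiv.symm_apply_apply]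
            simp; omega
        · intro j _; exact Equiv.symm_apply_apply _ _
        · intro j' _; exact Equiv.apply_symm_apply _ _
        · intro j _
          rw [Equiv.Perm.mul_apply, Equiv.symm_apply_apply]
      rw [hre]
      refine Finset.prod_le_prod (fun j' _ => hG0 _ _) ?_
      intro j' hj'
      simp only [Finset.mem_erase, hS, mem_filter, mem_univ, true_and] at hj'
      obtain ⟨hne, hle⟩ := hj'
      rcases lt_or_ge (j' : ℕ) (q : ℕ) with h | h
      · have hthis : e j' = j' := cyc_apply_lt q jj hqj j' h
        have hs : e.symm j' = j' := e.symm_apply_eq.2 hthis.symm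
        rw [hs]
      · have hgt : (q : ℕ) < (j' : ℕ) := by
          rcases lt_or_eq_of_le h with h' | h'
          · exact h'
          · exact absurd (Fin.ext h'.symm) hne
        have heq : e ⟨(j' : ℕ) - 1, by omega⟩ = j' := by
          apply Fin.ext
          rw [cyc_apply_mid q jj hqj _ (by simp; omega) (by simp; omega)]
          simp; omega
        have hs : e.symm j' = ⟨(j' : ℕ) - 1, by omega⟩ := e.symm_apply_eq.2 heq.symm
        rw [hs]
        have hv : ((⟨(j' : ℕ) - 1, by omega⟩ : Fin n) : ℕ) + 1 = (j' : ℕ) := by simp; omega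
        rw [hv]
        exact hGmono _ _ (by omega) j'.isLt
    calc ∑ π ∈ univ.filter (fun π : Equiv.Perm (Fin n) => π q = i),
            ∏ j ∈ S k, G (π j) ((j : ℕ) + 1)
        ≤ ∑ π ∈ univ.filter (fun π : Equiv.Perm (Fin n) => π q = i),
            G i ((q : ℕ) + 1) * ∏ j ∈ S (k-1), G ((π * e) j) ((j : ℕ) + 1) := by
          refine Finset.sum_le_sum ?_
          intro π hπ
          simp only [mem_filter, mem_univ, true_and] at hπ
          exact key π hπ
      _ = G i ((q : ℕ) + 1) * ∑ π ∈ univ.filter (fun π : Equiv.Perm (Fin n) => π q = i),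
            ∏ j ∈ S (k-1), G ((π * e) j) ((j : ℕ) + 1) := by rw [Finset.mul_sum]
      _ = _ := by
          rw [fiber_sum e q jj i (cyc_apply_c q jj hqj) (fun π => ∏ j ∈ S (k-1), G (π j) ((j : ℕ) + 1))]
  · -- case B : i is revealed after time k
    rw [if_neg hq]
    have hqjj : q ≠ jj := by intro h; subst h; omega
    set e := Equiv.swap jj q with he
    have hSk : S k = insert jj (S (k-1)) := by
      ext j
      simp only [hS, mem_filter, mem_univ, true_and, Finset.mem_insert]
      constructor
      · intro h
        rcases Nat.lt_or_ge ((j : ℕ) + 1) k with h' | h'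
        · right; omega
        · left; apply Fin.ext; omega
      · rintro (rfl | h) <;> omega
    have hjjS : jj ∉ S (k-1) := by simp [hS]; omega
    have key : ∀ π : Equiv.Perm (Fin n), π q = i →
        ∏ j ∈ S k, G (π j) ((j : ℕ) + 1)
          ≤ ∏ j ∈ S (k-1), G ((π * e) j) ((j : ℕ) + 1) := by
      intro π hπ
      rw [hSk, Finset.prod_insert hjjS]
      have hsame : ∀ j ∈ S (k-1), G (π j) ((j : ℕ) + 1) = G ((π * e) j) ((j : ℕ) + 1) := by
        intro j hj
        simp only [hS, mem_filter, mem_univ, true_and] at hj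
        have h1 : j ≠ jj := by intro h; subst h; omega
        have h2 : j ≠ q := by intro h; subst h; omega
        rw [Equiv.Perm.mul_apply, he, Equiv.swap_apply_of_ne_of_ne h1 h2]
      rw [Finset.prod_congr rfl hsame]
      exact mul_le_of_le_one_left (hprodnn (π * e) (k-1)) (hG1 _ _)
    calc ∑ π ∈ univ.filter (fun π : Equiv.Perm (Fin n) => π q = i),
            ∏ j ∈ S k, G (π j) ((j : ℕ) + 1)
        ≤ ∑ π ∈ univ.filter (fun π : Equiv.Perm (Fin n) => π q = i),
            ∏ j ∈ S (k-1), G ((π * e) j) ((j : ℕ) + 1) := by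
          refine Finset.sum_le_sum ?_
          intro π hπ
          simp only [mem_filter, mem_univ, true_and] at hπ
          exact key π hπ
      _ = _ := by
          rw [fiber_sum e q jj i (Equiv.swap_apply_left jj q)
            (fun π => ∏ j ∈ S (k-1), G (π j) ((j : ℕ) + 1)), one_mul]

end Combin

lemma combin {n : ℕ} (k : ℕ) (hk1 : 1 ≤ k) (hkn : k ≤ n)
    (jj : Fin n) (hjj : (jj : ℕ) + 1 = k) (i : Fin n)
    (G : Fin n → ℕ → ℝ) (hG0 : ∀ a m, 0 ≤ G a m) (hG1 : ∀ a m, G a m ≤ 1)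
    (hGmono : ∀ a m, 1 ≤ m → m < n → G a (m + 1) ≤ G a m) :
    ∑ π : Equiv.Perm (Fin n),
        ∏ j ∈ univ.filter (fun j : Fin n => (j : ℕ) + 1 ≤ k), G (π j) ((j : ℕ) + 1)
      ≤ ((n : ℝ) - k + ∑ l ∈ Finset.Icc 1 k, G i l)
        * ∑ π ∈ univ.filter (fun π : Equiv.Perm (Fin n) => π jj = i),
            ∏ j ∈ univ.filter (fun j : Fin n => (j : ℕ) + 1 ≤ k - 1), G (π j) ((j : ℕ) + 1) := by
  classical
  set B := ∑ π ∈ univ.filter (fun π : Equiv.Perm (Fin n) => π jj = i),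
      ∏ j ∈ univ.filter (fun j : Fin n => (j : ℕ) + 1 ≤ k - 1), G (π j) ((j : ℕ) + 1) with hB
  have hBnn : 0 ≤ B :=
    Finset.sum_nonneg fun π _ => Finset.prod_nonneg fun j _ => hG0 _ _
  have hfib : ∑ q : Fin n, ∑ π ∈ univ.filter (fun π : Equiv.Perm (Fin n) => π q = i),
        ∏ j ∈ univ.filter (fun j : Fin n => (j : ℕ) + 1 ≤ k), G (π j) ((j : ℕ) + 1)
      = ∑ π : Equiv.Perm (Fin n),
        ∏ j ∈ univ.filter (fun j : Fin n => (j : ℕ) + 1 ≤ k), G (π j) ((j : ℕ) + 1) := by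
    have h0 := Finset.sum_fiberwise_eq_sum_filter univ univ
      (fun π : Equiv.Perm (Fin n) => π.symm i)
      (fun π => ∏ j ∈ univ.filter (fun j : Fin n => (j : ℕ) + 1 ≤ k), G (π j) ((j : ℕ) + 1))
    simp only [mem_univ, Finset.filter_true] at h0
    rw [← h0]
    congr 1
    ext q
    congr 1
    ext π
    simp only [mem_filter, mem_univ, true_and]
    rw [Equiv.symm_apply_eq, eq_comm]
  rw [← hfib]
  calc ∑ q : Fin n, ∑ π ∈ univ.filter (fun π : Equiv.Perm (Fin n) => π q = i),
        ∏ j ∈ univ.filter (fun j : Fin n => (j : ℕ) + 1 ≤ k), G (π j) ((j : ℕ) + 1)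
      ≤ ∑ q : Fin n, (if (q : ℕ) < k then G i ((q : ℕ) + 1) else 1) * B :=
        Finset.sum_le_sum fun q _ =>
          perfiber k hk1 hkn jj hjj i G hG0 hG1 hGmono q
    _ = (∑ q : Fin n, (if (q : ℕ) < k then G i ((q : ℕ) + 1) else 1)) * B := by
        rw [← Finset.sum_mul]
    _ = ((n : ℝ) - k + ∑ l ∈ Finset.Icc 1 k, G i l) * B := by
        congr 1
        rw [Finset.sum_ite, Finset.sum_const]
        have hc2 : (univ.filter (fun q : Fin n => (q : ℕ) < k)).card = k := by
          have : (univ.filter (fun q : Fin n => (q : ℕ) < k)).card = (Finset.range k).card := by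
            refine Finset.card_nbij' (fun q => (q : ℕ))
              (fun l => ⟨l % n, Nat.mod_lt _ (by omega)⟩) ?_ ?_ ?_ ?_
            · intro q hq
              simp only [mem_coe, mem_filter, mem_univ, true_and] at hq
              exact Finset.mem_coe.2 (Finset.mem_range.2 hq)
            · intro l hl
              have hl' := Finset.mem_range.1 (Finset.mem_coe.1 hl)
              have hmod : l % n = l := Nat.mod_eq_of_lt (by omega)
              simp only [mem_coe, mem_filter, mem_univ, true_and, hmod]
              omega
            · intro q hq
              apply Fin.ext
              exact Nat.mod_eq_of_lt q.isLt
            · intro l hl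
              have hl' := Finset.mem_range.1 (Finset.mem_coe.1 hl)
              exact Nat.mod_eq_of_lt (by omega)
          rw [this, Finset.card_range]
        have hc1 : (univ.filter (fun q : Fin n => ¬ (q : ℕ) < k)).card = n - k := by
          have h3 : (univ.filter (fun q : Fin n => (q : ℕ) < k)).card
              + (univ.filter (fun q : Fin n => ¬ (q : ℕ) < k)).card
              = (univ : Finset (Fin n)).card :=
            Finset.card_filter_add_card_filter_not _
          rw [hc2, Finset.card_univ, Fintype.card_fin] at h3
          omega
        have hsum : ∑ q ∈ univ.filter (fun q : Fin n => (q : ℕ) < k), G i ((q : ℕ) + 1)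
            = ∑ l ∈ Finset.Icc 1 k, G i l := by
          refine Finset.sum_nbij' (fun q => (q : ℕ) + 1)
            (fun l => ⟨(l - 1) % n, Nat.mod_lt _ (by omega)⟩) ?_ ?_ ?_ ?_ ?_
          · intro q hq
            simp only [mem_filter, mem_univ, true_and] at hq
            simp only [Finset.mem_Icc]; omega
          · intro l hl
            have hl' := Finset.mem_Icc.1 hl
            have hmod : (l - 1) % n = l - 1 := Nat.mod_eq_of_lt (by omega)
            simp only [mem_filter, mem_univ, true_and, hmod]
            omega
          · intro q hq
            simp only [mem_filter, mem_univ, true_and] at hq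
            apply Fin.ext
            have hmod : ((q : ℕ) + 1 - 1) % n = (q : ℕ) := Nat.mod_eq_of_lt q.isLt
            exact hmod
          · intro l hl
            have hl' := Finset.mem_Icc.1 hl
            have hmod : (l - 1) % n = l - 1 := Nat.mod_eq_of_lt (by omega)
            simp only [hmod]
            omega
          · intro q _; rfl
        rw [hsum, hc1]
        have hcast : ((n - k : ℕ) : ℝ) = (n : ℝ) - k := by
          push_cast [Nat.cast_sub hkn]; ring
        rw [nsmul_eq_mul, hcast]
        ring

open MeasureTheory ProbabilityTheory


lemma le_stopT_iff {Ω : Type*} {n : ℕ} (V : Fin n → Ω → ℝ) (τ : ℕ → ℝ)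
    (σ : Ω → Equiv.Perm (Fin n)) (ω : Ω) (k : ℕ) (hk : k ≤ n + 1) :
    k ≤ stopT V τ σ ω ↔ ∀ j : Fin n, (j : ℕ) + 1 < k → V (σ ω j) ω ≤ τ ((j : ℕ) + 1) := by
  rw [stopT, le_csInf_iff (OrderBot.bddBelow _) ⟨n + 1, Or.inr rfl⟩]
  constructor
  · intro h j hj
    by_contra hlt
    have := h ((j : ℕ) + 1) (Or.inl ⟨j, rfl, not_le.1 hlt⟩)
    omega
  · rintro h m (⟨j, rfl, hlt⟩ | rfl)
    · by_contra hm
      exact absurd (h j (by omega)) (not_le.2 hlt)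
    · exact hk

open MeasureTheory ProbabilityTheory

theorem stmt14 {Ω : Type*} [MeasurableSpace Ω] (μ : Measure Ω) [IsProbabilityMeasure μ]
    (n : ℕ) (hn : 0 < n) (V : Fin n → Ω → ℝ)
    (hVmeas : ∀ i, Measurable (V i))
    (hVindep : iIndepFun V μ)
    (σ : Ω → Equiv.Perm (Fin n))
    (hσmeas : ∀ π, MeasurableSet {ω | σ ω = π})
    (hσunif : ∀ π, μ {ω | σ ω = π} = ((n.factorial : ENNReal))⁻¹)
    (hindep : ∀ (π : Equiv.Perm (Fin n)) (A : Set (Fin n → ℝ)), MeasurableSet A →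
      μ ({ω | σ ω = π} ∩ {ω | (fun i => V i ω) ∈ A})
        = μ {ω | σ ω = π} * μ {ω | (fun i => V i ω) ∈ A})
    (τ : ℕ → ℝ)
    (hτ : ∀ k, 1 ≤ k → k < n → τ (k + 1) ≤ τ k)
    (i : Fin n) (k : ℕ) (hk1 : 1 ≤ k) (hkn : k ≤ n) :
    (μ ({ω | k ≤ stopT V τ σ ω}
          ∩ {ω | ∃ jj : Fin n, (jj : ℕ) + 1 = k ∧ σ ω jj = i})).toReal
        / (μ {ω | ∃ jj : Fin n, (jj : ℕ) + 1 = k ∧ σ ω jj = i}).toReal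
      ≥ (μ {ω | k < stopT V τ σ ω}).toReal
          / (1 - (k : ℝ) / n
              + (1 / n : ℝ) * ∑ l ∈ Finset.Icc 1 k, (μ {ω | V i ω ≤ τ l}).toReal) := by
  classical
  set N := n.factorial with hN
  have hNpos : 0 < N := Nat.factorial_pos n
  set jj₀ : Fin n := ⟨k - 1, by omega⟩ with hjj₀def
  have hjj₀ : (jj₀ : ℕ) + 1 = k := by simp [hjj₀def]; omega
  set S : ℕ → Finset (Fin n) :=
    fun m => Finset.univ.filter (fun j : Fin n => (j : ℕ) + 1 ≤ m) with hS
  set Aev : Equiv.Perm (Fin n) → ℕ → Set Ω :=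
    fun π m => ⋂ j ∈ S m, {ω | V (π j) ω ≤ τ ((j : ℕ) + 1)} with hAev
  set g : Fin n → ℕ → ENNReal := fun a m => μ {ω | V a ω ≤ τ m} with hg
  set G : Fin n → ℕ → ℝ := fun a m => (μ {ω | V a ω ≤ τ m}).toReal with hG
  set Φ : Finset (Equiv.Perm (Fin n)) :=
    Finset.univ.filter (fun π : Equiv.Perm (Fin n) => π jj₀ = i) with hΦ
  -- basic measurability
  have hmeasV : ∀ a (c : ℝ), MeasurableSet {ω | V a ω ≤ c} := fun a c =>
    (hVmeas a) measurableSet_Iic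
  have hmeasA : ∀ π m, MeasurableSet (Aev π m) := by
    intro π m
    exact MeasurableSet.biInter (Set.to_countable _) (fun j _ => hmeasV _ _)
  -- product formula from independence
  have hprod : ∀ (π : Equiv.Perm (Fin n)) m,
      μ (Aev π m) = ∏ j ∈ S m, g (π j) ((j : ℕ) + 1) := by
    intro π m
    have h := hVindep.measure_inter_preimage_eq_mul ((S m).image π)
      (sets := fun i' => Set.Iic (τ (((π.symm i' : Fin n) : ℕ) + 1)))
      (fun i' _ => measurableSet_Iic)
    have hset : (⋂ i' ∈ (S m).image π, V i' ⁻¹' Set.Iic (τ (((π.symm i' : Fin n) : ℕ) + 1)))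
        = Aev π m := by
      ext ω
      simp only [Set.mem_iInter, Finset.mem_image, Set.mem_preimage, Set.mem_Iic, hAev,
        Set.mem_setOf_eq]
      constructor
      · intro hh j hj
        have := hh (π j) ⟨j, hj, rfl⟩
        simpa using this
      · rintro hh i' ⟨j, hj, rfl⟩
        simpa using hh j hj
    rw [hset] at h
    rw [h, Finset.prod_image (fun a _ b _ hab => π.injective hab)]
    refine Finset.prod_congr rfl (fun j _ => ?_)
    simp only [Equiv.symm_apply_apply, hg]
    rfl
  -- per-permutation measure
  have hμA : ∀ (π : Equiv.Perm (Fin n)) m,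
      μ ({ω | σ ω = π} ∩ Aev π m)
        = (N : ENNReal)⁻¹ * ∏ j ∈ S m, g (π j) ((j : ℕ) + 1) := by
    intro π m
    set A : Set (Fin n → ℝ) := ⋂ j ∈ S m, {v : Fin n → ℝ | v (π j) ≤ τ ((j : ℕ) + 1)}
      with hA
    have hAmeas : MeasurableSet A :=
      MeasurableSet.biInter (Set.to_countable _)
        (fun j _ => measurableSet_le (measurable_pi_apply _) measurable_const)
    have heq : {ω | (fun a => V a ω) ∈ A} = Aev π m := by
      ext ω
      simp [hA, hAev, Set.mem_iInter]
    rw [show Aev π m = {ω | (fun a => V a ω) ∈ A} from heq.symm, hindep π A hAmeas,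
      hσunif π, heq, hprod π m]
  -- decomposition over permutations
  have hdecomp : ∀ E : Set Ω, (∀ π, MeasurableSet (E ∩ {ω | σ ω = π})) →
      μ E = ∑ π : Equiv.Perm (Fin n), μ (E ∩ {ω | σ ω = π}) := by
    intro E hE
    have hcover : E = ⋃ π ∈ (Finset.univ : Finset (Equiv.Perm (Fin n))),
        (E ∩ {ω | σ ω = π}) := by
      ext ω
      simp only [Set.mem_iUnion, Finset.mem_univ, Set.mem_inter_iff, Set.mem_setOf_eq,
        exists_true_left]
      exact ⟨fun h => ⟨σ ω, h, rfl⟩, fun ⟨π, h, _⟩ => h⟩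
    have hdisj : Set.PairwiseDisjoint
        (↑(Finset.univ : Finset (Equiv.Perm (Fin n)))) (fun π => E ∩ {ω | σ ω = π}) := by
      intro π _ π' _ hne
      refine Set.disjoint_left.2 ?_
      rintro ω ⟨_, h1⟩ ⟨_, h2⟩
      exact hne (h1 ▸ h2 ▸ rfl)
    conv_lhs => rw [hcover]
    rw [measure_biUnion_finset hdisj (fun π _ => hE π)]
  -- event identities
  have hE2 : {ω | ∃ jj : Fin n, (jj : ℕ) + 1 = k ∧ σ ω jj = i} = {ω | σ ω jj₀ = i} := by
    ext ω
    simp only [Set.mem_setOf_eq]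
    constructor
    · rintro ⟨jj, hjj, h⟩
      have : jj = jj₀ := Fin.ext (by simp [hjj₀def]; omega)
      exact this ▸ h
    · intro h
      exact ⟨jj₀, hjj₀, h⟩
  have hmemAev : ∀ π m ω, ω ∈ Aev π m ↔ ∀ j ∈ S m, V (π j) ω ≤ τ ((j : ℕ) + 1) := by
    intro π m ω
    simp [hAev, Set.mem_iInter]
  have hE1π : ∀ π : Equiv.Perm (Fin n),
      {ω | k ≤ stopT V τ σ ω} ∩ {ω | σ ω = π} = Aev π (k - 1) ∩ {ω | σ ω = π} := by
    intro π
    ext ω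
    simp only [Set.mem_inter_iff, Set.mem_setOf_eq, and_congr_left_iff]
    intro hσω
    rw [le_stopT_iff V τ σ ω k (by omega), hmemAev]
    constructor
    · intro h j hj
      simp only [hS, Finset.mem_filter, Finset.mem_univ, true_and] at hj
      rw [← hσω]
      exact h j (by omega)
    · intro h j hj
      have : j ∈ S (k - 1) := by
        simp only [hS, Finset.mem_filter, Finset.mem_univ, true_and]; omega
      rw [hσω]
      exact h j this
  have hE3π : ∀ π : Equiv.Perm (Fin n),
      {ω | k < stopT V τ σ ω} ∩ {ω | σ ω = π} = Aev π k ∩ {ω | σ ω = π} := by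
    intro π
    ext ω
    simp only [Set.mem_inter_iff, Set.mem_setOf_eq, and_congr_left_iff]
    intro hσω
    rw [show (k < stopT V τ σ ω ↔ k + 1 ≤ stopT V τ σ ω) from Iff.rfl,
      le_stopT_iff V τ σ ω (k + 1) (by omega), hmemAev]
    constructor
    · intro h j hj
      simp only [hS, Finset.mem_filter, Finset.mem_univ, true_and] at hj
      rw [← hσω]
      exact h j (by omega)
    · intro h j hj
      have : j ∈ S k := by
        simp only [hS, Finset.mem_filter, Finset.mem_univ, true_and]; omega
      rw [hσω]
      exact h j this
  -- measures as sums
  have hμ3 : μ {ω | k < stopT V τ σ ω}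
      = ∑ π : Equiv.Perm (Fin n), (N : ENNReal)⁻¹ * ∏ j ∈ S k, g (π j) ((j : ℕ) + 1) := by
    rw [hdecomp _ (fun π => by rw [hE3π π]; exact (hmeasA π k).inter (hσmeas π))]
    refine Finset.sum_congr rfl (fun π _ => ?_)
    rw [hE3π π, Set.inter_comm, hμA]
  have hpiece : ∀ π : Equiv.Perm (Fin n),
      ({ω | k ≤ stopT V τ σ ω} ∩ {ω | σ ω jj₀ = i}) ∩ {ω | σ ω = π}
        = if π jj₀ = i then Aev π (k - 1) ∩ {ω | σ ω = π} else ∅ := by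
    intro π
    split_ifs with hπ
    · have hBσ : {ω | σ ω jj₀ = i} ∩ {ω | σ ω = π} = {ω | σ ω = π} := by
        ext ω
        simp only [Set.mem_inter_iff, Set.mem_setOf_eq]
        exact ⟨fun h => h.2, fun h => ⟨by rw [h, hπ], h⟩⟩
      rw [Set.inter_assoc, hBσ, hE1π π]
    · ext ω
      simp only [Set.mem_inter_iff, Set.mem_setOf_eq, Set.mem_empty_iff_false, iff_false]
      rintro ⟨⟨_, h2⟩, h3⟩
      exact hπ (by rw [← h3]; exact h2)
  have hμ1 : μ ({ω | k ≤ stopT V τ σ ω} ∩ {ω | ∃ jj : Fin n, (jj : ℕ) + 1 = k ∧ σ ω jj = i})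
      = ∑ π ∈ Φ, (N : ENNReal)⁻¹ * ∏ j ∈ S (k - 1), g (π j) ((j : ℕ) + 1) := by
    rw [hE2]
    rw [hdecomp _ (fun π => by
      rw [hpiece π]
      split_ifs
      exacts [(hmeasA π (k - 1)).inter (hσmeas π), MeasurableSet.empty])]
    simp only [hpiece, apply_ite μ, measure_empty]
    rw [Finset.sum_ite, Finset.sum_const_zero, add_zero]
    exact Finset.sum_congr rfl fun π _ => by rw [Set.inter_comm, hμA]
  have hμ2 : μ {ω | ∃ jj : Fin n, (jj : ℕ) + 1 = k ∧ σ ω jj = i}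
      = (Φ.card : ENNReal) * (N : ENNReal)⁻¹ := by
    rw [hE2]
    have hpiece2 : ∀ π : Equiv.Perm (Fin n),
        {ω | σ ω jj₀ = i} ∩ {ω | σ ω = π} = if π jj₀ = i then {ω | σ ω = π} else ∅ := by
      intro π
      split_ifs with hπ
      · ext ω
        simp only [Set.mem_inter_iff, Set.mem_setOf_eq]
        exact ⟨fun h => h.2, fun h => ⟨by rw [h, hπ], h⟩⟩
      · ext ω
        simp only [Set.mem_inter_iff, Set.mem_setOf_eq, Set.mem_empty_iff_false, iff_false]
        rintro ⟨h2, h3⟩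
        exact hπ (by rw [← h3]; exact h2)
    rw [hdecomp _ (fun π => by
      rw [hpiece2 π]
      split_ifs
      exacts [hσmeas π, MeasurableSet.empty])]
    simp only [hpiece2, apply_ite μ, measure_empty]
    rw [Finset.sum_ite, Finset.sum_const_zero, add_zero]
    rw [Finset.sum_congr rfl (fun π (_ : π ∈ Finset.filter (fun π : Equiv.Perm (Fin n) =>
      π jj₀ = i) Finset.univ) => hσunif π), Finset.sum_const, nsmul_eq_mul]
  -- conversion to real numbers
  have hNE : ((N : ENNReal))⁻¹.toReal = (N : ℝ)⁻¹ := by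
    rw [ENNReal.toReal_inv, ENNReal.toReal_natCast]
  have htermfin : ∀ (π : Equiv.Perm (Fin n)) m,
      (N : ENNReal)⁻¹ * ∏ j ∈ S m, g (π j) ((j : ℕ) + 1) ≠ ⊤ := by
    intro π m
    refine ENNReal.mul_ne_top (ENNReal.inv_ne_top.2 (by exact_mod_cast hNpos.ne')) ?_
    exact (ENNReal.prod_lt_top (fun j _ => (measure_lt_top μ _))).ne
  have htermtoReal : ∀ (π : Equiv.Perm (Fin n)) m,
      ((N : ENNReal)⁻¹ * ∏ j ∈ S m, g (π j) ((j : ℕ) + 1)).toReal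
        = (N : ℝ)⁻¹ * ∏ j ∈ S m, G (π j) ((j : ℕ) + 1) := by
    intro π m
    rw [ENNReal.toReal_mul, hNE, ENNReal.toReal_prod]
  have hr3 : (μ {ω | k < stopT V τ σ ω}).toReal
      = (N : ℝ)⁻¹ * ∑ π : Equiv.Perm (Fin n), ∏ j ∈ S k, G (π j) ((j : ℕ) + 1) := by
    rw [hμ3, ENNReal.toReal_sum (fun π _ => htermfin π k)]
    rw [Finset.sum_congr rfl (fun π _ => htermtoReal π k), Finset.mul_sum]
  have hr1 : (μ ({ω | k ≤ stopT V τ σ ω}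
        ∩ {ω | ∃ jj : Fin n, (jj : ℕ) + 1 = k ∧ σ ω jj = i})).toReal
      = (N : ℝ)⁻¹ * ∑ π ∈ Φ, ∏ j ∈ S (k - 1), G (π j) ((j : ℕ) + 1) := by
    rw [hμ1, ENNReal.toReal_sum (fun π _ => htermfin π (k - 1))]
    rw [Finset.sum_congr rfl (fun π _ => htermtoReal π (k - 1)), Finset.mul_sum]
  have hr2 : (μ {ω | ∃ jj : Fin n, (jj : ℕ) + 1 = k ∧ σ ω jj = i}).toReal
      = (Φ.card : ℝ) * (N : ℝ)⁻¹ := by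
    rw [hμ2, ENNReal.toReal_mul, hNE, ENNReal.toReal_natCast]
  -- the combinatorial inequality
  have hG0 : ∀ a m, 0 ≤ G a m := fun a m => ENNReal.toReal_nonneg
  have hG1 : ∀ a m, G a m ≤ 1 := by
    intro a m
    have := (ENNReal.toReal_le_toReal (measure_ne_top μ _) ENNReal.one_ne_top).2
      (prob_le_one (μ := μ) (s := {ω | V a ω ≤ τ m}))
    simpa using this
  have hGmono : ∀ a m, 1 ≤ m → m < n → G a (m + 1) ≤ G a m := by
    intro a m h1 h2
    refine ENNReal.toReal_mono (measure_ne_top μ _) (measure_mono ?_)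
    intro ω hω
    exact le_trans hω (hτ m h1 h2)
  have hcomb : ∑ π : Equiv.Perm (Fin n), ∏ j ∈ S k, G (π j) ((j : ℕ) + 1)
      ≤ ((n : ℝ) - k + ∑ l ∈ Finset.Icc 1 k, G i l)
        * ∑ π ∈ Φ, ∏ j ∈ S (k - 1), G (π j) ((j : ℕ) + 1) := by
    simp only [hS, hΦ]
    exact combin k hk1 hkn jj₀ hjj₀ i G hG0 hG1 hGmono
  have hcard : (Φ.card : ℝ) * n = N := by
    have := card_fiber jj₀ i
    rw [hΦ]
    exact_mod_cast this
  -- final algebra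
  have hGi : ∀ l, (μ {ω | V i ω ≤ τ l}).toReal = G i l := fun l => rfl
  simp only [hGi]
  rw [hr1, hr2, hr3]
  set a := ∑ π ∈ Φ, ∏ j ∈ S (k - 1), G (π j) ((j : ℕ) + 1) with ha
  set r := ∑ π : Equiv.Perm (Fin n), ∏ j ∈ S k, G (π j) ((j : ℕ) + 1) with hr
  set D' := (n : ℝ) - k + ∑ l ∈ Finset.Icc 1 k, G i l with hD'
  have hann : 0 ≤ a := Finset.sum_nonneg fun π _ => Finset.prod_nonneg fun j _ => hG0 _ _
  have hrnn : 0 ≤ r := Finset.sum_nonneg fun π _ => Finset.prod_nonneg fun j _ => hG0 _ _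
  have hnR : (0 : ℝ) < n := by exact_mod_cast hn
  have hNR : (0 : ℝ) < N := by exact_mod_cast hNpos
  have hD'nn : 0 ≤ D' := by
    have h1 : 0 ≤ ∑ l ∈ Finset.Icc 1 k, G i l :=
      Finset.sum_nonneg fun l _ => hG0 _ _
    have h2 : (k : ℝ) ≤ n := by exact_mod_cast hkn
    rw [hD']; linarith
  have hden : 1 - (k : ℝ) / n + (1 / n : ℝ) * ∑ l ∈ Finset.Icc 1 k, G i l = D' / n := by
    rw [hD']
    field_simp
  rw [hden]
  have hcardpos : (0 : ℝ) < (Φ.card : ℝ) := by nlinarith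
  rcases eq_or_lt_of_le hD'nn with hD0 | hDpos
  · rw [← hD0]
    rw [zero_div, div_zero]
    exact div_nonneg (mul_nonneg (inv_nonneg.2 hNR.le) hann)
      (mul_nonneg (Nat.cast_nonneg _) (inv_nonneg.2 hNR.le))
  · rw [ge_iff_le, div_le_div_iff₀ (div_pos hDpos hnR)
      (mul_pos hcardpos (inv_pos.2 hNR))]
    have hNne : (N : ℝ) ≠ 0 := hNR.ne'
    have hnne : (n : ℝ) ≠ 0 := hnR.ne'
    have hΦN : (Φ.card : ℝ) = N / n := by
      field_simp
      linarith [hcard]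
    rw [hΦN]
    have hlhs : (N : ℝ)⁻¹ * r * ((N : ℝ) / n * (N : ℝ)⁻¹) = r / (n * N) := by
      field_simp
    have hrhs : (N : ℝ)⁻¹ * a * (D' / n) = (D' * a) / (n * N) := by
      field_simp
    rw [hlhs, hrhs]
    gcongr
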